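/- arXiv:2201.10483 — 6 statements merged into one kernel-verified Lean document; each statement's English description precedes it below -/
import Mathlib

section
/- With the setup of multi-agent location-scale performative prediction (gradient gⁱ(θ⃗) = 2A(θⁱ + Σ_j λ_j θʲ) − 2b for agent i), the partial derivative of the potential Φ(θ⃗) = (Σ_i λ_i θⁱ)ᵀA(Σ_i λ_i θⁱ) + Σ_i λ_i (θⁱ)ᵀAθⁱ − 2bᵀΣ_i λ_i θⁱ with respect to θⁱ_k equals λ_i · gⁱ_k(θ⃗), i.e., ∇_{θⁱ}Φ(θ⃗) = 2λ_i(A(θⁱ + Σ_j λ_j θʲ) − b). -/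
open Matrix

theorem potential_partial_deriv (n d : ℕ) (A : Matrix (Fin d) (Fin d) ℝ) (hA : A.IsSymm)
    (b : Fin d → ℝ) (lam : Fin n → ℝ) (hlam : ∀ i, 0 < lam i)
    (θ : Fin n → Fin d → ℝ) (i : Fin n) (k : Fin d) :
    let Φ : (Fin n → Fin d → ℝ) → ℝ := fun ϑ =>
      (∑ j, lam j • ϑ j) ⬝ᵥ A.mulVec (∑ j, lam j • ϑ j)
        + ∑ j, lam j * (ϑ j ⬝ᵥ A.mulVec (ϑ j))
        - 2 * (b ⬝ᵥ ∑ j, lam j • ϑ j)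
    let g : Fin d → ℝ := fun l => 2 * (A.mulVec (θ i + ∑ j, lam j • θ j) l - b l)
    HasDerivAt (fun t => Φ (Function.update θ i (Function.update (θ i) k t)))
      (lam i * g k) (θ i k) := by
  intro Φ g
  set t₀ := θ i k with ht₀
  set e : Fin d → ℝ := Pi.single k 1 with he
  set V : Fin d → ℝ := ∑ j, lam j • θ j with hV
  set C : ℝ := ∑ j, lam j * (θ j ⬝ᵥ A.mulVec (θ j)) with hC
  have hupd : ∀ t : ℝ, Function.update (θ i) k t = θ i + (t - t₀) • e := by
    intro t; funext l
    by_cases h : l = k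
    · subst h; simp [he, ht₀]
    · simp [Function.update_of_ne h, he, Pi.single_eq_of_ne h]
  have hsum : ∀ x : Fin d → ℝ, (∑ j, lam j • Function.update θ i x j)
      = V + lam i • x - lam i • θ i := by
    intro x
    have h1 : ∀ j, lam j • Function.update θ i x j
        = lam j • θ j + (if j = i then lam i • x - lam i • θ i else 0) := by
      intro j
      by_cases h : j = i
      · subst h; simp [Function.update_self]
      · simp [Function.update_of_ne h, h]
    simp_rw [h1, Finset.sum_add_distrib, Finset.sum_ite_eq' Finset.univ i]
    simp [hV]; abel
  have hsum2 : ∀ x : Fin d → ℝ,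
      (∑ j, lam j * (Function.update θ i x j ⬝ᵥ A.mulVec (Function.update θ i x j)))
      = C + lam i * (x ⬝ᵥ A.mulVec x) - lam i * (θ i ⬝ᵥ A.mulVec (θ i)) := by
    intro x
    have h1 : ∀ j, lam j * (Function.update θ i x j ⬝ᵥ A.mulVec (Function.update θ i x j))
        = lam j * (θ j ⬝ᵥ A.mulVec (θ j))
          + (if j = i then lam i * (x ⬝ᵥ A.mulVec x) - lam i * (θ i ⬝ᵥ A.mulVec (θ i)) else 0) := by
      intro j
      by_cases h : j = i
      · subst h; simp [Function.update_self]
      · simp [Function.update_of_ne h, h]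
    simp_rw [h1, Finset.sum_add_distrib, Finset.sum_ite_eq' Finset.univ i]
    simp [hC]; ring
  have hsymm : ∀ x : Fin d → ℝ, x ⬝ᵥ A.mulVec e = e ⬝ᵥ A.mulVec x := by
    intro x
    rw [dotProduct_mulVec, ← Matrix.mulVec_transpose, hA.eq, dotProduct_comm]
  have hdot : ∀ x : Fin d → ℝ, e ⬝ᵥ x = x k := by intro x; simp [he]
  set a : ℝ := lam i ^ 2 * (e ⬝ᵥ A.mulVec e) + lam i * (e ⬝ᵥ A.mulVec e) with ha
  set b₁ : ℝ := lam i * (V ⬝ᵥ A.mulVec e + e ⬝ᵥ A.mulVec V)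
      + lam i * (θ i ⬝ᵥ A.mulVec e + e ⬝ᵥ A.mulVec (θ i)) - 2 * (lam i * (b ⬝ᵥ e)) with hb₁
  set c₀ : ℝ := V ⬝ᵥ A.mulVec V + C - 2 * (b ⬝ᵥ V) with hc₀
  have key : (fun t => Φ (Function.update θ i (Function.update (θ i) k t)))
      = fun t => a * (t - t₀) ^ 2 + b₁ * (t - t₀) + c₀ := by
    funext t
    have hu : Function.update (θ i) k t = θ i + (t - t₀) • e := hupd t
    show Φ (Function.update θ i (Function.update (θ i) k t)) = _
    simp only [Φ, hu, hsum, hsum2]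
    have hv : V + lam i • (θ i + (t - t₀) • e) - lam i • θ i
        = V + (lam i * (t - t₀)) • e := by
      rw [smul_add, smul_smul]; abel
    rw [hv, ha, hb₁, hc₀]
    simp only [dotProduct_add, add_dotProduct, mulVec_add, mulVec_smul,
      dotProduct_smul, smul_dotProduct, smul_eq_mul]
    ring
  rw [key]
  have h1 : HasDerivAt (fun t : ℝ => t - t₀) 1 t₀ := (hasDerivAt_id t₀).sub_const t₀
  have h2 : HasDerivAt (fun t : ℝ => a * (t - t₀) ^ 2 + b₁ * (t - t₀) + c₀)
      (a * (2 * (t₀ - t₀) ^ 1 * 1) + b₁ * 1) t₀ :=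
    (((h1.pow 2).const_mul a).add (h1.const_mul b₁)).add_const c₀
  have hb : a * (2 * (t₀ - t₀) ^ 1 * 1) + b₁ * 1 = lam i * g k := by
    have hg : g k = 2 * ((A.mulVec (θ i)) k + (A.mulVec V) k - b k) := by
      show 2 * ((A.mulVec (θ i + V)) k - b k) = _
      rw [mulVec_add]; simp
    rw [hg, ha, hb₁, hsymm V, hsymm (θ i), dotProduct_comm b e]; simp only [hdot]
    ring
  rw [← hb]; exact h2
end

section
/- Let θ ∈ Δ_d with all θ_k > 0, g ∈ ℝᵈ, ḡ = Σ_l θ_l g_l, η > 0 with η·max_k|ḡ − g_k| ≤ 1, and ξ_k = θ_k(ḡ − g_k). Define θ'_k = θ_k·exp(η(ḡ − g_k)) / Σ_l θ_l·exp(η(ḡ − g_l)). Then for every k, |θ'_k − θ_k − η·ξ_k| ≤ e·η²·Σ_l θ_l(ḡ − g_l)², using Σ_l θ_l = 1, Σ_l ξ_l = 0, and the bound 1+x ≤ eˣ ≤ 1+x+(e/2)x² for x ≤ 1. -/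
lemma exp_taylor2 {x : ℝ} (hx : |x| ≤ 1) : |Real.exp x - 1 - x| ≤ (3/4) * x ^ 2 := by
  have h := Real.exp_bound hx (n := 2) (by norm_num)
  have hsum : ∑ m ∈ Finset.range 2, x ^ m / m.factorial = 1 + x := by
    simp [Finset.sum_range_succ]
  rw [hsum] at h
  have : |x| ^ 2 = x ^ 2 := sq_abs x
  calc |Real.exp x - 1 - x| = |Real.exp x - (1 + x)| := by ring_nf
    _ ≤ |x| ^ 2 * ((2 : ℕ).succ / ((2:ℕ).factorial * 2)) := h
    _ ≤ (3/4) * x ^ 2 := by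
        rw [sq_abs]
        have : ((2:ℕ).succ : ℝ) / ((2:ℕ).factorial * 2) = 3/4 := by
          norm_num [Nat.factorial]
        rw [this]; ring_nf; exact le_rfl

set_option maxHeartbeats 1000000 in
theorem exp_gradient_step_approximation (d : ℕ) (θ : Fin d → ℝ)
    (hθ : θ ∈ stdSimplex ℝ (Fin d)) (hpos : ∀ k, 0 < θ k)
    (g : Fin d → ℝ) (η : ℝ) (hη : 0 < η) :
    let gbar : ℝ := ∑ l, θ l * g l
    let ξ : Fin d → ℝ := fun k => θ k * (gbar - g k)
    let θ' : Fin d → ℝ := fun k =>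
      θ k * Real.exp (η * (gbar - g k)) / ∑ l, θ l * Real.exp (η * (gbar - g l))
    (∀ k, η * |gbar - g k| ≤ 1) →
      ∀ k, |θ' k - θ k - η * ξ k| ≤
        Real.exp 1 * η ^ 2 * ∑ l, θ l * (gbar - g l) ^ 2 := by
  intro gbar ξ θ' hb k
  obtain ⟨hθ0, hθ1⟩ := hθ
  set x : Fin d → ℝ := fun l => η * (gbar - g l) with hxdef
  have hx1 : ∀ l, |x l| ≤ 1 := by
    intro l
    have := hb l
    rwa [← abs_of_pos hη, ← abs_mul] at this
  have hE : ∀ l, |Real.exp (x l) - 1 - x l| ≤ (3/4) * (x l) ^ 2 :=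
    fun l => exp_taylor2 (hx1 l)
  -- sum of θ l * x l is zero
  have hsum0 : ∑ l, θ l * x l = 0 := by
    have : ∑ l, θ l * x l = η * ((∑ l, θ l) * gbar - ∑ l, θ l * g l) := by
      rw [Finset.sum_mul, ← Finset.sum_sub_distrib, Finset.mul_sum]
      congr 1; ext l; ring
    rw [this, hθ1, one_mul, sub_self, mul_zero]
  set V : ℝ := ∑ l, θ l * (x l) ^ 2 with hVdef
  have hV0 : 0 ≤ V := Finset.sum_nonneg fun l _ =>
    mul_nonneg (hθ0 l) (sq_nonneg _)
  set S : ℝ := ∑ l, θ l * Real.exp (x l) with hSdef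
  have hS1 : 1 ≤ S := by
    have : ∑ l, θ l * (1 + x l) ≤ S := by
      apply Finset.sum_le_sum
      intro l _
      exact mul_le_mul_of_nonneg_left (by linarith [Real.add_one_le_exp (x l)]) (hθ0 l)
    calc (1:ℝ) = ∑ l, θ l * (1 + x l) := by
          rw [Finset.sum_congr rfl (fun l _ => show θ l * (1 + x l) = θ l + θ l * x l by ring)]
          rw [Finset.sum_add_distrib, hθ1, hsum0, add_zero]
      _ ≤ S := this
  have hSu : S ≤ 1 + (3/4) * V := by
    have : S ≤ ∑ l, θ l * (1 + x l + (3/4) * (x l) ^ 2) := by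
      apply Finset.sum_le_sum
      intro l _
      apply mul_le_mul_of_nonneg_left _ (hθ0 l)
      have := (abs_le.mp (hE l)).2
      linarith
    calc S ≤ ∑ l, θ l * (1 + x l + (3/4) * (x l) ^ 2) := this
      _ = 1 + (3/4) * V := by
          rw [Finset.sum_congr rfl (fun l _ => show θ l * (1 + x l + (3/4) * (x l) ^ 2)
              = θ l + θ l * x l + (3/4) * (θ l * (x l)^2) by ring)]
          rw [Finset.sum_add_distrib, Finset.sum_add_distrib, hθ1, hsum0,
            ← Finset.mul_sum]
          ring
  have hSpos : 0 < S := lt_of_lt_of_le one_pos hS1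
  -- rewrite the quantity
  have hθk1 : θ k ≤ 1 := by
    rw [← hθ1]
    exact Finset.single_le_sum (fun l _ => hθ0 l) (Finset.mem_univ k)
  have key : θ' k - θ k - η * ξ k
      = θ k * (Real.exp (x k) - (1 + x k) * S) / S := by
    show θ k * Real.exp (x k) / S - θ k - η * ξ k
        = θ k * (Real.exp (x k) - (1 + x k) * S) / S
    have hξ : η * ξ k = θ k * x k := by
      show η * (θ k * (gbar - g k)) = θ k * (η * (gbar - g k)); ring
    rw [hξ]
    field_simp
    ring
  rw [key]
  set a : ℝ := Real.exp (x k) - 1 - x k with hadef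
  have ha0 : 0 ≤ a := by
    have := Real.add_one_le_exp (x k); simp only [hadef]; linarith
  have hau : a ≤ (3/4) * (x k) ^ 2 := (abs_le.mp (hE k)).2
  set b : ℝ := (1 + x k) * (S - 1) with hbdef
  have hxk : -1 ≤ x k := neg_le_of_abs_le (hx1 k)
  have hxk' : x k ≤ 1 := le_of_abs_le (hx1 k)
  have hb0 : 0 ≤ b := mul_nonneg (by linarith) (by linarith)
  have hbu : b ≤ 2 * ((3/4) * V) :=
    mul_le_mul (by linarith) (by linarith) (by linarith) (by norm_num)
  have hab : Real.exp (x k) - (1 + x k) * S = a - b := by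
    simp only [hadef, hbdef]; ring
  rw [hab]
  have habs : |a - b| ≤ max a b := by
    rcases le_total b a with h | h
    · rw [abs_of_nonneg (by linarith)]
      exact le_max_of_le_left (by linarith)
    · rw [abs_of_nonpos (by linarith)]
      exact le_max_of_le_right (by linarith)
  have hθka : θ k * a ≤ (3/4) * V := by
    have h1 : θ k * a ≤ θ k * ((3/4) * (x k)^2) :=
      mul_le_mul_of_nonneg_left hau (hθ0 k)
    have h2 : θ k * (x k)^2 ≤ V := by
      exact Finset.single_le_sum (fun l _ => mul_nonneg (hθ0 l) (sq_nonneg _))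
        (Finset.mem_univ k)
    nlinarith
  have hθkb : θ k * b ≤ (3/2) * V := by nlinarith
  have hmain : θ k * |a - b| ≤ (3/2) * V := by
    rcases max_cases a b with ⟨hm, _⟩ | ⟨hm, _⟩
    · have := mul_le_mul_of_nonneg_left habs (hθ0 k)
      rw [hm] at this; nlinarith
    · have := mul_le_mul_of_nonneg_left habs (hθ0 k)
      rw [hm] at this; nlinarith
  have e2 : (2:ℝ) ≤ Real.exp 1 := by
    have := Real.add_one_le_exp (1:ℝ); linarith
  calc |θ k * (a - b) / S| = θ k * |a - b| / S := by
        rw [abs_div, abs_of_pos hSpos, abs_mul, abs_of_nonneg (hθ0 k)]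
    _ ≤ θ k * |a - b| := by
        apply div_le_self (mul_nonneg (hθ0 k) (abs_nonneg _)) hS1
    _ ≤ (3/2) * V := hmain
    _ ≤ Real.exp 1 * V := by nlinarith
    _ = Real.exp 1 * η ^ 2 * ∑ l, θ l * (gbar - g l) ^ 2 := by
        have hVeq : V = η ^ 2 * ∑ l, θ l * (gbar - g l) ^ 2 := by
          rw [hVdef, Finset.mul_sum]
          exact Finset.sum_congr rfl fun l _ => by
            show θ l * (η * (gbar - g l)) ^ 2 = η ^ 2 * (θ l * (gbar - g l) ^ 2); ring
        rw [hVeq]; ring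
end

section
/- Consider the replicator-type ODE dϑⁱ_k/dt = c_i·ϑⁱ_k·(ḡⁱ(ϑ⃗) − gⁱ_k(ϑ⃗)) with constants c_i = η_i/‖η‖₁ > 0, where gⁱ(ϑ⃗) = 2A(ϑⁱ + Σ_j λ_j ϑʲ) − 2b and ḡⁱ = Σ_l ϑⁱ_l gⁱ_l. Along any solution, d/dt Φ(ϑ⃗(t)) = −(1/(2‖η‖₁))·Σ_i λ_i η_i Σ_{k,l} ϑⁱ_k ϑⁱ_l (gⁱ_k − gⁱ_l)² ≤ 0, where Φ(θ⃗) = (Σ_i λ_iθⁱ)ᵀA(Σ_i λ_iθⁱ) + Σ_i λ_i(θⁱ)ᵀAθⁱ − 2bᵀΣ_i λ_iθⁱ. Moreover this derivative is zero exactly at fixed points of the ODE. -/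
open Matrix

open Matrix

theorem aux_deriv {n d : ℕ} (A : Matrix (Fin d) (Fin d) ℝ) (hA : A.IsSymm)
    (b : Fin d → ℝ) (lam : Fin n → ℝ) (f : ℝ → Fin n → Fin d → ℝ)
    (v : Fin n → Fin d → ℝ) (t : ℝ)
    (hf : ∀ j k, HasDerivAt (fun s => f s j k) (v j k) t) :
    HasDerivAt (fun s => (∑ j, lam j • f s j) ⬝ᵥ A.mulVec (∑ j, lam j • f s j)
      + ∑ j, lam j * (f s j ⬝ᵥ A.mulVec (f s j)) - 2 * (b ⬝ᵥ ∑ j, lam j • f s j))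
      (∑ i, lam i * ∑ k, v i k * (2 * (A.mulVec (f t i + ∑ j, lam j • f t j) k - b k))) t := by
  simp only [dotProduct, mulVec, Pi.add_apply, Finset.sum_apply, Pi.smul_apply, smul_eq_mul]
  set p : Fin d → ℝ := fun k => ∑ j, lam j * f t j k with hp_def
  set q : Fin d → ℝ := fun k => ∑ j, lam j * v j k with hq_def
  have hp : ∀ k, HasDerivAt (fun s => ∑ j, lam j * f s j k) (q k) t :=
    fun k => HasDerivAt.fun_sum fun j _ => (hf j k).const_mul (lam j)
  have hterm1 : HasDerivAt
      (fun s => ∑ k, (∑ j, lam j * f s j k) * ∑ k', A k k' * ∑ j, lam j * f s j k')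
      (∑ k, (q k * ∑ k', A k k' * p k' + p k * ∑ k', A k k' * q k')) t :=
    HasDerivAt.fun_sum fun k _ => ((hp k).mul
      (HasDerivAt.fun_sum fun k' _ => (hp k').const_mul (A k k')))
  have hterm2 : HasDerivAt
      (fun s => ∑ j, lam j * ∑ k, f s j k * ∑ k', A k k' * f s j k')
      (∑ j, lam j * ∑ k, (v j k * ∑ k', A k k' * f t j k' + f t j k * ∑ k', A k k' * v j k')) t :=
    HasDerivAt.fun_sum fun j _ => (HasDerivAt.fun_sum fun k _ => ((hf j k).mul
      (HasDerivAt.fun_sum fun k' _ => (hf j k').const_mul (A k k')))).const_mul (lam j)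
  have hterm3 : HasDerivAt
      (fun s => 2 * ∑ k, b k * ∑ j, lam j * f s j k)
      (2 * ∑ k, b k * q k) t :=
    (HasDerivAt.fun_sum fun k _ => (hp k).const_mul (b k)).const_mul 2
  have hmain := (hterm1.add hterm2).sub hterm3
  convert hmain using 1
  case e'_4 => rfl
  case e'_5 => rfl
  case e'_8 => rfl
  -- now prove equality of derivative values
  have swap : ∀ x y : Fin d → ℝ,
      ∑ k, x k * ∑ k', A k k' * y k' = ∑ k, y k * ∑ k', A k k' * x k' := by
    intro x y
    simp_rw [Finset.mul_sum]
    rw [Finset.sum_comm]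
    refine Finset.sum_congr rfl fun k _ => Finset.sum_congr rfl fun k' _ => ?_
    rw [hA.apply k k']; ring
  have expand_q : ∀ X : Fin d → ℝ,
      ∑ k, q k * X k = ∑ j, lam j * ∑ k, v j k * X k := by
    intro X
    simp_rw [hq_def, Finset.sum_mul, Finset.mul_sum, mul_assoc]
    exact Finset.sum_comm
  have e1 : ∑ k, (q k * ∑ k', A k k' * p k' + p k * ∑ k', A k k' * q k')
      = 2 * ∑ k, q k * ∑ k', A k k' * p k' := by
    rw [Finset.sum_add_distrib, swap p q]; ring
  have e2 : ∀ j, ∑ k, (v j k * ∑ k', A k k' * f t j k' + f t j k * ∑ k', A k k' * v j k')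
      = 2 * ∑ k, v j k * ∑ k', A k k' * f t j k' := by
    intro j
    rw [Finset.sum_add_distrib, swap (f t j) (v j)]; ring
  have e3 : (∑ k, b k * q k) = ∑ k, q k * b k := by simp [mul_comm]
  rw [e1, e3, expand_q, expand_q (fun k => b k)]
  simp_rw [e2]
  rw [Finset.mul_sum, Finset.mul_sum, ← Finset.sum_add_distrib, ← Finset.sum_sub_distrib]
  refine Finset.sum_congr rfl fun j _ => ?_
  have hsplit : ∀ k, (∑ k', A k k' * (f t j k' + ∑ i, lam i * f t i k'))
      = (∑ k', A k k' * f t j k') + ∑ k', A k k' * p k' := by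
    intro k
    rw [← Finset.sum_add_distrib]
    exact Finset.sum_congr rfl fun k' _ => by rw [hp_def]; ring
  show _ = _
  set_option maxHeartbeats 1000000 in
  simp only [hsplit, mul_sub, mul_add, Finset.sum_add_distrib, Finset.sum_sub_distrib, Finset.mul_sum]
  simp only [hp_def, Finset.mul_sum]
  simp only [mul_comm, mul_left_comm, mul_assoc]
  ring


theorem key_identity {d : ℕ} (u g : Fin d → ℝ) (hsum : ∑ k, u k = 1) :
    ∑ k, ∑ l, u k * u l * (g k - g l) ^ 2
      = 2 * (∑ k, u k * g k ^ 2) - 2 * (∑ k, u k * g k) ^ 2 := by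
  have expand : ∀ k l : Fin d, u k * u l * (g k - g l) ^ 2
      = (u k * g k ^ 2) * u l - (2 * (u k * g k)) * (u l * g l) + (u k) * (u l * g l ^ 2) :=
    fun k l => by ring
  have h1 : ∑ k : Fin d, ∑ l : Fin d, (u k * g k ^ 2) * u l = ∑ k, u k * g k ^ 2 := by
    simp_rw [← Finset.mul_sum, hsum, mul_one]
  have h2 : ∑ k : Fin d, ∑ l : Fin d, (2 * (u k * g k)) * (u l * g l)
      = 2 * (∑ k, u k * g k) ^ 2 := by
    simp_rw [← Finset.mul_sum, ← Finset.sum_mul]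
    rw [show (∑ i : Fin d, 2 * (u i * g i)) = 2 * ∑ i : Fin d, u i * g i from
      (Finset.mul_sum _ _ _).symm]
    ring
  have h3 : ∑ k : Fin d, ∑ l : Fin d, (u k) * (u l * g l ^ 2) = ∑ l, u l * g l ^ 2 := by
    simp_rw [← Finset.mul_sum, ← Finset.sum_mul, hsum, one_mul]
  calc ∑ k, ∑ l, u k * u l * (g k - g l) ^ 2
      = ∑ k : Fin d, ∑ l : Fin d, ((u k * g k ^ 2) * u l - (2 * (u k * g k)) * (u l * g l)
          + (u k) * (u l * g l ^ 2)) := by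
        exact Finset.sum_congr rfl fun k _ => Finset.sum_congr rfl fun l _ => expand k l
    _ = (∑ k : Fin d, ∑ l : Fin d, (u k * g k ^ 2) * u l)
          - (∑ k : Fin d, ∑ l : Fin d, (2 * (u k * g k)) * (u l * g l))
          + ∑ k : Fin d, ∑ l : Fin d, (u k) * (u l * g l ^ 2) := by
        simp_rw [Finset.sum_add_distrib, Finset.sum_sub_distrib]
    _ = 2 * (∑ k, u k * g k ^ 2) - 2 * (∑ k, u k * g k) ^ 2 := by
        rw [h1, h2, h3]; ring

theorem key_lhs {d : ℕ} (u g : Fin d → ℝ) :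
    ∑ k, u k * g k * ((∑ l, u l * g l) - g k)
      = (∑ k, u k * g k) ^ 2 - ∑ k, u k * g k ^ 2 := by
  simp_rw [mul_sub, Finset.sum_sub_distrib, ← Finset.sum_mul]
  have : ∑ k, u k * g k * g k = ∑ k, u k * g k ^ 2 :=
    Finset.sum_congr rfl fun k _ => by ring
  rw [this]; ring

theorem key_nonneg {d : ℕ} (u g : Fin d → ℝ) (hu : ∀ k, 0 ≤ u k) :
    0 ≤ ∑ k, ∑ l, u k * u l * (g k - g l) ^ 2 :=
  Finset.sum_nonneg fun k _ => Finset.sum_nonneg fun l _ =>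
    mul_nonneg (mul_nonneg (hu k) (hu l)) (sq_nonneg _)

theorem key_zero {d : ℕ} (u g : Fin d → ℝ) (hu : ∀ k, 0 ≤ u k) (hsum : ∑ k, u k = 1) :
    (∑ k, ∑ l, u k * u l * (g k - g l) ^ 2 = 0)
      ↔ ∀ k, u k * ((∑ l, u l * g l) - g k) = 0 := by
  constructor
  · intro hS k
    have hterms : ∀ k' ∈ (Finset.univ : Finset (Fin d)),
        ∑ l, u k' * u l * (g k' - g l) ^ 2 = 0 := by
      rw [← Finset.sum_eq_zero_iff_of_nonneg
        (fun k' _ => Finset.sum_nonneg fun l _ =>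
          mul_nonneg (mul_nonneg (hu k') (hu l)) (sq_nonneg _))]
      exact hS
    have hterm : ∀ l ∈ (Finset.univ : Finset (Fin d)), u k * u l * (g k - g l) ^ 2 = 0 := by
      rw [← Finset.sum_eq_zero_iff_of_nonneg
        (fun l _ => mul_nonneg (mul_nonneg (hu k) (hu l)) (sq_nonneg _))]
      exact hterms k (Finset.mem_univ k)
    have hz : ∀ l, u k * u l * (g l - g k) = 0 := by
      intro l
      rcases mul_eq_zero.1 (hterm l (Finset.mem_univ l)) with h | h
      · rw [h, zero_mul]
      · rw [pow_eq_zero_iff (by norm_num), sub_eq_zero] at h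
        rw [h, sub_self, mul_zero]
    calc u k * ((∑ l, u l * g l) - g k)
        = ∑ l, u k * u l * (g l - g k) := by
          rw [mul_sub, Finset.mul_sum]
          rw [show u k * g k = u k * ((∑ l, u l) * g k) by rw [hsum]; ring]
          rw [Finset.sum_mul, Finset.mul_sum, ← Finset.sum_sub_distrib]
          exact Finset.sum_congr rfl fun l _ => by ring
      _ = 0 := Finset.sum_eq_zero fun l _ => hz l
  · intro h
    rw [key_identity u g hsum]
    have : ∑ k, g k * (u k * ((∑ l, u l * g l) - g k)) = 0 :=
      Finset.sum_eq_zero fun k _ => by rw [h k, mul_zero]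
    have h2 : ∑ k, u k * g k * ((∑ l, u l * g l) - g k) = 0 := by
      rw [← this]; exact Finset.sum_congr rfl fun k _ => by ring
    rw [key_lhs u g] at h2
    nlinarith [h2]


theorem potential_decreases_along_replicator_ode (n d : ℕ)
    (A : Matrix (Fin d) (Fin d) ℝ) (hA : A.IsSymm) (b : Fin d → ℝ)
    (lam η : Fin n → ℝ) (hlam : ∀ i, 0 < lam i) (hη : ∀ i, 0 < η i)
    (ϑ : ℝ → Fin n → Fin d → ℝ)
    (hsimplex : ∀ t i, ϑ t i ∈ stdSimplex ℝ (Fin d)) :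
    let g : (Fin n → Fin d → ℝ) → Fin n → Fin d → ℝ := fun θ i k =>
      2 * (A.mulVec (θ i + ∑ j, lam j • θ j) k - b k)
    let gbar : (Fin n → Fin d → ℝ) → Fin n → ℝ := fun θ i => ∑ l, θ i l * g θ i l
    let Φ : (Fin n → Fin d → ℝ) → ℝ := fun θ =>
      (∑ j, lam j • θ j) ⬝ᵥ A.mulVec (∑ j, lam j • θ j)
        + ∑ j, lam j * (θ j ⬝ᵥ A.mulVec (θ j))
        - 2 * (b ⬝ᵥ ∑ j, lam j • θ j)
    let D : ℝ → ℝ := fun t =>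
      -(1 / (2 * ∑ j, η j)) * ∑ i, lam i * η i *
        ∑ k, ∑ l, ϑ t i k * ϑ t i l * (g (ϑ t) i k - g (ϑ t) i l) ^ 2
    (∀ t i k, HasDerivAt (fun s => ϑ s i k)
        ((η i / ∑ j, η j) * ϑ t i k * (gbar (ϑ t) i - g (ϑ t) i k)) t) →
      ∀ t, HasDerivAt (fun s => Φ (ϑ s)) (D t) t ∧ D t ≤ 0 ∧
        (D t = 0 ↔ ∀ i k, ϑ t i k * (gbar (ϑ t) i - g (ϑ t) i k) = 0) := by
  intro g gbar Φ D hderiv t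
  set Sη : ℝ := ∑ j, η j with hSη_def
  have hSη_nonneg : 0 ≤ Sη := Finset.sum_nonneg fun j _ => (hη j).le
  have hu_nonneg : ∀ i k, 0 ≤ ϑ t i k := fun i k => (hsimplex t i).1 k
  have hu_sum : ∀ i, ∑ k, ϑ t i k = 1 := fun i => (hsimplex t i).2
  have hSη_pos : ∀ _ : Fin n, 0 < Sη := fun i =>
    Finset.sum_pos (fun j _ => hη j) ⟨i, Finset.mem_univ i⟩
  -- the quadratic spread for each agent
  set S : Fin n → ℝ := fun i =>
    ∑ k, ∑ l, ϑ t i k * ϑ t i l * (g (ϑ t) i k - g (ϑ t) i l) ^ 2 with hS_def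
  have hS_nonneg : ∀ i, 0 ≤ S i := fun i => key_nonneg _ _ (hu_nonneg i)
  have hD_eq : D t = -(1 / (2 * Sη)) * ∑ i, lam i * η i * S i := rfl
  -- the derivative from aux_deriv
  have hEq : D t = ∑ i, lam i * ∑ k,
      ((η i / Sη) * ϑ t i k * (gbar (ϑ t) i - g (ϑ t) i k)) * (g (ϑ t) i k) := by
    rw [hD_eq, Finset.mul_sum]
    refine Finset.sum_congr rfl fun i _ => ?_
    have hM : gbar (ϑ t) i = ∑ l, ϑ t i l * g (ϑ t) i l := rfl
    have hlhs : ∑ k, ((η i / Sη) * ϑ t i k * (gbar (ϑ t) i - g (ϑ t) i k)) * (g (ϑ t) i k)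
        = (η i / Sη) * ∑ k, ϑ t i k * g (ϑ t) i k * ((∑ l, ϑ t i l * g (ϑ t) i l) - g (ϑ t) i k) := by
      rw [Finset.mul_sum]
      exact Finset.sum_congr rfl fun k _ => by rw [hM]; ring
    rw [hlhs, key_lhs (ϑ t i) (g (ϑ t) i),
      show S i = _ from key_identity (ϑ t i) (g (ϑ t) i) (hu_sum i)]
    have h0 : Sη ≠ 0 := (hSη_pos i).ne'
    field_simp
    ring
  refine ⟨?_, ?_, ?_⟩
  · have h := aux_deriv A hA b lam ϑ
      (fun i k => (η i / Sη) * ϑ t i k * (gbar (ϑ t) i - g (ϑ t) i k)) t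
      (fun j k => hderiv t j k)
    rw [hEq]
    exact h
  · rw [hD_eq]
    have hT : 0 ≤ ∑ i, lam i * η i * S i :=
      Finset.sum_nonneg fun i _ =>
        mul_nonneg (mul_nonneg (hlam i).le (hη i).le) (hS_nonneg i)
    have h1 : 0 ≤ 1 / (2 * Sη) := by positivity
    nlinarith
  · rw [hD_eq]
    constructor
    · intro hzero i k
      have h0 : Sη ≠ 0 := (hSη_pos i).ne'
      have hp : (0:ℝ) < 1 / (2 * Sη) := by
        have := (hSη_pos i); positivity
      have hT : ∑ i, lam i * η i * S i = 0 := by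
        rcases mul_eq_zero.1 hzero with h | h
        · exfalso; rw [neg_eq_zero] at h; exact hp.ne' h
        · exact h
      have hSi : ∀ i ∈ (Finset.univ : Finset (Fin n)), lam i * η i * S i = 0 := by
        rw [← Finset.sum_eq_zero_iff_of_nonneg
          (fun i _ => mul_nonneg (mul_nonneg (hlam i).le (hη i).le) (hS_nonneg i))]
        exact hT
      have hSi0 : S i = 0 := by
        rcases mul_eq_zero.1 (hSi i (Finset.mem_univ i)) with h | h
        · exact absurd h (mul_pos (hlam i) (hη i)).ne'
        · exact h
      exact (key_zero (ϑ t i) (g (ϑ t) i) (hu_nonneg i) (hu_sum i)).1 hSi0 k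
    · intro h
      have : ∀ i, S i = 0 := fun i =>
        (key_zero (ϑ t i) (g (ϑ t) i) (hu_nonneg i) (hu_sum i)).2 (h i)
      rw [Finset.sum_eq_zero fun i _ => by rw [this i, mul_zero], mul_zero]
end

section
/- Let f: [0,1] → [0,1] be continuous and suppose there exist points x₀, x₁, x₂, x₃ ∈ [0,1] with f(x₀) = x₁, f(x₁) = x₂, f(x₂) = x₃ and x₃ ≤ x₀ < x₁ (equivalently f³(x₀) ≤ x₀ < f(x₀)). Then f has a periodic point of period 3, and hence periodic points of every period n ≥ 1. -/
private lemma liy_contIter (f : ℝ → ℝ) (hf : ContinuousOn f (Set.Icc 0 1)) {Q : Set ℝ}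
    (n : ℕ) (h : ∀ i, i < n → ∀ t ∈ Q, f^[i] t ∈ Set.Icc (0:ℝ) 1) :
    ContinuousOn (f^[n]) Q := by
  induction n with
  | zero => simpa using continuousOn_id
  | succ n ih =>
    rw [Function.iterate_succ']
    exact hf.comp (ih fun i hi t ht => h i (by omega) t ht)
      (fun t ht => h n (by omega) t ht)

private lemma liy_pullback_mono (f : ℝ → ℝ) {a b c d : ℝ} (hab : a ≤ b)
    (hf : ContinuousOn f (Set.Icc a b)) (hcd : c ≤ d)
    (hac : f a ≤ c) (hdb : d ≤ f b) :
    ∃ p q, a ≤ p ∧ p ≤ q ∧ q ≤ b ∧ f p = c ∧ f q = d ∧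
      ∀ t ∈ Set.Icc p q, f t ∈ Set.Icc c d := by
  have hTne : ∃ t ∈ Set.Icc a b, f t = d := by
    obtain ⟨t, ht, hft⟩ := intermediate_value_Icc hab hf ⟨hac.trans hcd, hdb⟩
    exact ⟨t, ht, hft⟩
  set T : Set ℝ := Set.Icc a b ∩ f ⁻¹' {d} with hTdef
  have hTc : IsClosed T := hf.preimage_isClosed_of_isClosed isClosed_Icc isClosed_singleton
  have hTne' : T.Nonempty := by obtain ⟨t, ht, hft⟩ := hTne; exact ⟨t, ht, hft⟩
  have hTbdd : BddBelow T := ⟨a, fun t ht => ht.1.1⟩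
  set q := sInf T with hqdef
  have hqT : q ∈ T := hTc.csInf_mem hTne' hTbdd
  have haq : a ≤ q := hqT.1.1
  have hqb : q ≤ b := hqT.1.2
  have hfq : f q = d := hqT.2
  have hfq' : ContinuousOn f (Set.Icc a q) := hf.mono (Set.Icc_subset_Icc le_rfl hqb)
  have hSne : ∃ t ∈ Set.Icc a q, f t = c := by
    obtain ⟨t, ht, hft⟩ := intermediate_value_Icc haq hfq' ⟨hac, hcd.trans hfq.symm.le⟩
    exact ⟨t, ht, hft⟩
  set S : Set ℝ := Set.Icc a q ∩ f ⁻¹' {c} with hSdef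
  have hSc : IsClosed S := hfq'.preimage_isClosed_of_isClosed isClosed_Icc isClosed_singleton
  have hSne' : S.Nonempty := by obtain ⟨t, ht, hft⟩ := hSne; exact ⟨t, ht, hft⟩
  have hSbdd : BddAbove S := ⟨q, fun t ht => ht.1.2⟩
  set p := sSup S with hpdef
  have hpS : p ∈ S := hSc.csSup_mem hSne' hSbdd
  have hap : a ≤ p := hpS.1.1
  have hpq : p ≤ q := hpS.1.2
  have hfp : f p = c := hpS.2
  refine ⟨p, q, hap, hpq, hqb, hfp, hfq, ?_⟩
  intro t ⟨hpt, htq⟩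
  constructor
  · by_contra hlt
    push_neg at hlt
    have hftc : f t < c := hlt
    have : ∃ s ∈ Set.Icc t q, f s = c := by
      obtain ⟨s, hs, hfs⟩ := intermediate_value_Icc htq
        (hf.mono (Set.Icc_subset_Icc (hap.trans hpt) hqb)) ⟨hftc.le, hcd.trans hfq.symm.le⟩
      exact ⟨s, hs, hfs⟩
    obtain ⟨s, ⟨hts, hsq⟩, hfs⟩ := this
    have hsS : s ∈ S := ⟨⟨hap.trans (hpt.trans hts), hsq⟩, hfs⟩
    have hsp : s ≤ p := le_csSup hSbdd hsS
    have : s = t := le_antisymm (hsp.trans hpt) hts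
    rw [this] at hfs; linarith
  · by_contra hlt
    push_neg at hlt
    have : ∃ s ∈ Set.Icc p t, f s = d := by
      obtain ⟨s, hs, hfs⟩ := intermediate_value_Icc hpt
        (hf.mono (Set.Icc_subset_Icc hap (htq.trans hqb))) ⟨hfp.le.trans hcd, hlt.le⟩
      exact ⟨s, hs, hfs⟩
    obtain ⟨s, ⟨hps, hst⟩, hfs⟩ := this
    have hsT : s ∈ T := ⟨⟨hap.trans hps, (hst.trans htq).trans hqb⟩, hfs⟩
    have hqs : q ≤ s := csInf_le hTbdd hsT
    have : s = t := le_antisymm hst (htq.trans hqs)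
    rw [this] at hfs; linarith

private lemma liy_pullback_anti (f : ℝ → ℝ) {a b c d : ℝ} (hab : a ≤ b)
    (hf : ContinuousOn f (Set.Icc a b)) (hcd : c ≤ d)
    (hbc : f b ≤ c) (hda : d ≤ f a) :
    ∃ p q, a ≤ p ∧ p ≤ q ∧ q ≤ b ∧ f p = d ∧ f q = c ∧
      ∀ t ∈ Set.Icc p q, f t ∈ Set.Icc c d := by
  have hTne : ∃ t ∈ Set.Icc a b, f t = c := by
    obtain ⟨t, ht, hft⟩ := intermediate_value_Icc' hab hf ⟨hbc, hcd.trans hda⟩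
    exact ⟨t, ht, hft⟩
  set T : Set ℝ := Set.Icc a b ∩ f ⁻¹' {c} with hTdef
  have hTc : IsClosed T := hf.preimage_isClosed_of_isClosed isClosed_Icc isClosed_singleton
  have hTne' : T.Nonempty := by obtain ⟨t, ht, hft⟩ := hTne; exact ⟨t, ht, hft⟩
  have hTbdd : BddBelow T := ⟨a, fun t ht => ht.1.1⟩
  set q := sInf T with hqdef
  have hqT : q ∈ T := hTc.csInf_mem hTne' hTbdd
  have haq : a ≤ q := hqT.1.1
  have hqb : q ≤ b := hqT.1.2
  have hfq : f q = c := hqT.2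
  have hfq' : ContinuousOn f (Set.Icc a q) := hf.mono (Set.Icc_subset_Icc le_rfl hqb)
  have hSne : ∃ t ∈ Set.Icc a q, f t = d := by
    obtain ⟨t, ht, hft⟩ := intermediate_value_Icc' haq hfq' ⟨hfq.le.trans hcd, hda⟩
    exact ⟨t, ht, hft⟩
  set S : Set ℝ := Set.Icc a q ∩ f ⁻¹' {d} with hSdef
  have hSc : IsClosed S := hfq'.preimage_isClosed_of_isClosed isClosed_Icc isClosed_singleton
  have hSne' : S.Nonempty := by obtain ⟨t, ht, hft⟩ := hSne; exact ⟨t, ht, hft⟩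
  have hSbdd : BddAbove S := ⟨q, fun t ht => ht.1.2⟩
  set p := sSup S with hpdef
  have hpS : p ∈ S := hSc.csSup_mem hSne' hSbdd
  have hap : a ≤ p := hpS.1.1
  have hpq : p ≤ q := hpS.1.2
  have hfp : f p = d := hpS.2
  refine ⟨p, q, hap, hpq, hqb, hfp, hfq, ?_⟩
  intro t ⟨hpt, htq⟩
  constructor
  · by_contra hlt
    push_neg at hlt
    have : ∃ s ∈ Set.Icc p t, f s = c := by
      obtain ⟨s, hs, hfs⟩ := intermediate_value_Icc' hpt
        (hf.mono (Set.Icc_subset_Icc hap (htq.trans hqb))) ⟨hlt.le, hcd.trans hfp.symm.le⟩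
      exact ⟨s, hs, hfs⟩
    obtain ⟨s, ⟨hps, hst⟩, hfs⟩ := this
    have hsT : s ∈ T := ⟨⟨hap.trans hps, (hst.trans htq).trans hqb⟩, hfs⟩
    have hqs : q ≤ s := csInf_le hTbdd hsT
    have : s = t := le_antisymm hst (htq.trans hqs)
    rw [this] at hfs; linarith
  · by_contra hlt
    push_neg at hlt
    have : ∃ s ∈ Set.Icc t q, f s = d := by
      obtain ⟨s, hs, hfs⟩ := intermediate_value_Icc' htq
        (hf.mono (Set.Icc_subset_Icc (hap.trans hpt) hqb)) ⟨hfq.le.trans hcd, hlt.le⟩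
      exact ⟨s, hs, hfs⟩
    obtain ⟨s, ⟨hts, hsq⟩, hfs⟩ := this
    have hsS : s ∈ S := ⟨⟨hap.trans (hpt.trans hts), hsq⟩, hfs⟩
    have hsp : s ≤ p := le_csSup hSbdd hsS
    have : s = t := le_antisymm (hsp.trans hpt) hts
    rw [this] at hfs; linarith

private lemma liy_minmax {u v c d : ℝ} (h1 : min u v ≤ c) (h2 : d ≤ max u v) :
    (u ≤ c ∧ d ≤ v) ∨ (v ≤ c ∧ d ≤ u) := by
  rcases le_total u v with h | h
  · exact Or.inl ⟨by rwa [min_eq_left h] at h1, by rwa [max_eq_right h] at h2⟩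
  · exact Or.inr ⟨by rwa [min_eq_right h] at h1, by rwa [max_eq_left h] at h2⟩

private lemma liy_chain (f : ℝ → ℝ) (hf : ContinuousOn f (Set.Icc 0 1))
    (K : ℕ → ℝ × ℝ) (hK : ∀ i, 0 ≤ (K i).1 ∧ (K i).1 ≤ (K i).2 ∧ (K i).2 ≤ 1)
    (hcov : ∀ i, min (f (K i).1) (f (K i).2) ≤ (K (i+1)).1 ∧
                 (K (i+1)).2 ≤ max (f (K i).1) (f (K i).2)) :
    ∀ n : ℕ, ∃ p q, p ≤ q ∧ (K 0).1 ≤ p ∧ q ≤ (K 0).2 ∧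
      (∀ i, i ≤ n → ∀ t ∈ Set.Icc p q, f^[i] t ∈ Set.Icc (K i).1 (K i).2) ∧
      ((f^[n] p = (K n).1 ∧ f^[n] q = (K n).2) ∨
       (f^[n] p = (K n).2 ∧ f^[n] q = (K n).1)) := by
  intro n
  induction n with
  | zero =>
    refine ⟨(K 0).1, (K 0).2, (hK 0).2.1, le_rfl, le_rfl, ?_, Or.inl ⟨rfl, rfl⟩⟩
    intro i hi t ht
    obtain rfl : i = 0 := Nat.le_zero.mp hi
    simpa using ht
  | succ n ih =>
    obtain ⟨p, q, hpq, h0p, hq0, hit, hend⟩ := ih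
    have h01 : ∀ i, i ≤ n → ∀ t ∈ Set.Icc p q, f^[i] t ∈ Set.Icc (0:ℝ) 1 :=
      fun i hi t ht => ⟨(hK i).1.trans (hit i hi t ht).1, (hit i hi t ht).2.trans (hK i).2.2⟩
    have hcN : ContinuousOn (f^[n+1]) (Set.Icc p q) :=
      liy_contIter f hf (n+1) (fun i hi t ht => h01 i (by omega) t ht)
    have hp' : f^[n+1] p = f (f^[n] p) := Function.iterate_succ_apply' f n p
    have hq' : f^[n+1] q = f (f^[n] q) := Function.iterate_succ_apply' f n q
    have hcd : (K (n+1)).1 ≤ (K (n+1)).2 := (hK (n+1)).2.1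
    have key : (f^[n+1] p ≤ (K (n+1)).1 ∧ (K (n+1)).2 ≤ f^[n+1] q) ∨
               (f^[n+1] q ≤ (K (n+1)).1 ∧ (K (n+1)).2 ≤ f^[n+1] p) := by
      rcases hend with ⟨h1, h2⟩ | ⟨h1, h2⟩
      · rw [hp', hq', h1, h2]
        exact liy_minmax (hcov n).1 (hcov n).2
      · rw [hp', hq', h1, h2]
        exact (liy_minmax (hcov n).1 (hcov n).2).symm
    rcases key with ⟨hc1, hc2⟩ | ⟨hc1, hc2⟩
    · obtain ⟨p', q', hpp', hp'q', hq'q, hgp', hgq', himg⟩ :=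
        liy_pullback_mono (f^[n+1]) hpq hcN hcd hc1 hc2
      refine ⟨p', q', hp'q', h0p.trans hpp', hq'q.trans hq0, ?_, Or.inl ⟨hgp', hgq'⟩⟩
      intro i hi t ht
      rcases Nat.lt_succ_iff_lt_or_eq.mp (Nat.lt_succ_of_le hi) with h | rfl
      · exact hit i (by omega) t ⟨hpp'.trans ht.1, ht.2.trans hq'q⟩
      · exact himg t ht
    · obtain ⟨p', q', hpp', hp'q', hq'q, hgp', hgq', himg⟩ :=
        liy_pullback_anti (f^[n+1]) hpq hcN hcd hc1 hc2
      refine ⟨p', q', hp'q', h0p.trans hpp', hq'q.trans hq0, ?_, Or.inr ⟨hgp', hgq'⟩⟩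
      intro i hi t ht
      rcases Nat.lt_succ_iff_lt_or_eq.mp (Nat.lt_succ_of_le hi) with h | rfl
      · exact hit i (by omega) t ⟨hpp'.trans ht.1, ht.2.trans hq'q⟩
      · exact himg t ht

private lemma liy_master (f : ℝ → ℝ) (hf : ContinuousOn f (Set.Icc 0 1))
    (l₁ l₂ s₁ s₂ P : ℝ)
    (hl0 : 0 ≤ l₁) (hl : l₁ ≤ l₂) (hl1 : l₂ ≤ 1)
    (hs0 : 0 ≤ s₁) (hs : s₁ ≤ s₂) (hs1 : s₂ ≤ 1)
    (hLL1 : min (f l₁) (f l₂) ≤ l₁) (hLL2 : l₂ ≤ max (f l₁) (f l₂))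
    (hLS1 : min (f l₁) (f l₂) ≤ s₁) (hLS2 : s₂ ≤ max (f l₁) (f l₂))
    (hSL1 : min (f s₁) (f s₂) ≤ l₁) (hSL2 : l₂ ≤ max (f s₁) (f s₂))
    (hcap : ∀ y, l₁ ≤ y → y ≤ l₂ → s₁ ≤ y → y ≤ s₂ → y = P)
    (hp1 : f P ≠ P)
    (hdeg : l₁ ≤ f P → f P ≤ l₂ → ¬ (l₁ ≤ f (f P) ∧ f (f P) ≤ l₂)) :
    ∀ n, 2 ≤ n → ∃ x ∈ Set.Icc (0:ℝ) 1, Function.minimalPeriod f x = n := by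
  intro n hn
  set K : ℕ → ℝ × ℝ := fun i => if i % n = n - 1 then (s₁, s₂) else (l₁, l₂) with hKdef
  have hKS : ∀ i, i % n = n - 1 → K i = (s₁, s₂) := by
    intro i hi; simp [hKdef, hi]
  have hKL : ∀ i, i % n ≠ n - 1 → K i = (l₁, l₂) := by
    intro i hi; simp [hKdef, hi]
  have hK : ∀ i, 0 ≤ (K i).1 ∧ (K i).1 ≤ (K i).2 ∧ (K i).2 ≤ 1 := by
    intro i
    by_cases hi : i % n = n - 1
    · rw [hKS i hi]; exact ⟨hs0, hs, hs1⟩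
    · rw [hKL i hi]; exact ⟨hl0, hl, hl1⟩
  have hcov : ∀ i, min (f (K i).1) (f (K i).2) ≤ (K (i+1)).1 ∧
      (K (i+1)).2 ≤ max (f (K i).1) (f (K i).2) := by
    intro i
    by_cases hi : i % n = n - 1
    · have h2 : (i+1) % n = 0 := by
        have h3 : (i + 1) % n = (i % n + 1 % n) % n := Nat.add_mod i 1 n
        have h4 : 1 % n = 1 := Nat.mod_eq_of_lt (by omega)
        rw [h4, hi, Nat.sub_add_cancel (by omega), Nat.mod_self] at h3
        exact h3
      have h3 : (i+1) % n ≠ n - 1 := by omega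
      rw [hKS i hi, hKL (i+1) h3]
      exact ⟨hSL1, hSL2⟩
    · rw [hKL i hi]
      by_cases h2 : (i+1) % n = n - 1
      · rw [hKS (i+1) h2]; exact ⟨hLS1, hLS2⟩
      · rw [hKL (i+1) h2]; exact ⟨hLL1, hLL2⟩
  have hK0 : K 0 = (l₁, l₂) := hKL 0 (by rw [Nat.zero_mod]; omega)
  have hKn : K n = (l₁, l₂) := hKL n (by rw [Nat.mod_self]; omega)
  have hKn1 : K (n-1) = (s₁, s₂) := hKS (n-1) (Nat.mod_eq_of_lt (by omega))
  have hKj : ∀ j, j ≤ n - 2 → K j = (l₁, l₂) := by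
    intro j hj
    exact hKL j (by rw [Nat.mod_eq_of_lt (by omega)]; omega)
  obtain ⟨p, q, hpq, h0p, hq0, hit, hend⟩ := liy_chain f hf K hK hcov n
  rw [hK0] at h0p hq0
  rw [hKn] at hend
  have hsubL : Set.Icc p q ⊆ Set.Icc l₁ l₂ := Set.Icc_subset_Icc h0p hq0
  have hsub01 : Set.Icc p q ⊆ Set.Icc (0:ℝ) 1 :=
    hsubL.trans (Set.Icc_subset_Icc hl0 hl1)
  have hcN : ContinuousOn (f^[n]) (Set.Icc p q) :=
    liy_contIter f hf n (fun i hi t ht =>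
      ⟨(hK i).1.trans (hit i (by omega) t ht).1, (hit i (by omega) t ht).2.trans (hK i).2.2⟩)
  have hg : ContinuousOn (fun t => f^[n] t - t) (Set.Icc p q) :=
    hcN.sub continuousOn_id
  have hfix : ∃ x ∈ Set.Icc p q, f^[n] x = x := by
    rcases hend with ⟨h1, h2⟩ | ⟨h1, h2⟩
    · have h0mem : (0:ℝ) ∈ Set.Icc (f^[n] p - p) (f^[n] q - q) := by
        rw [h1, h2]; constructor <;> [linarith; linarith]
      obtain ⟨x, hx, hx0⟩ := intermediate_value_Icc hpq hg h0mem
      exact ⟨x, hx, by dsimp at hx0; linarith⟩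
    · have h0mem : (0:ℝ) ∈ Set.Icc (f^[n] q - q) (f^[n] p - p) := by
        rw [h1, h2]; constructor <;> [linarith; linarith]
      obtain ⟨x, hx, hx0⟩ := intermediate_value_Icc' hpq hg h0mem
      exact ⟨x, hx, by dsimp at hx0; linarith⟩
  obtain ⟨x, hxmem, hfx⟩ := hfix
  have hper : Function.IsPeriodicPt f n x := hfx
  refine ⟨x, hsub01 hxmem, ?_⟩
  set d := Function.minimalPeriod f x with hd
  have hdvd : d ∣ n := hper.minimalPeriod_dvd
  have hdpos : 0 < d := hper.minimalPeriod_pos (by omega)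
  by_contra hne
  have hdn : d < n := lt_of_le_of_ne (Nat.le_of_dvd (by omega) hdvd) hne
  -- itinerary facts
  have h1 : f^[n-1] x ∈ Set.Icc s₁ s₂ := by
    have := hit (n-1) (by omega) x hxmem
    rwa [hKn1] at this
  have hr : f^[(n-1) % d] x = f^[n-1] x := by
    rw [hd]; exact Function.iterate_mod_minimalPeriod_eq
  have hrle : (n-1) % d ≤ n - 2 := by
    have : (n-1) % d < d := Nat.mod_lt _ hdpos
    omega
  have h2 : f^[n-1] x ∈ Set.Icc l₁ l₂ := by
    have h3 := hit ((n-1) % d) (by omega) x hxmem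
    rw [hKj _ hrle] at h3
    rwa [hr] at h3
  have hPeq : f^[n-1] x = P := hcap _ h2.1 h2.2 h1.1 h1.2
  have hn1 : n - 1 + 1 = n := by omega
  have hstep : f^[n] x = f (f^[n-1] x) := by
    conv_lhs => rw [← hn1]
    exact Function.iterate_succ_apply' f (n-1) x
  have hxP : x = f P := by rw [← hfx, hstep, hPeq]
  rcases Nat.lt_or_ge n 3 with h3 | h3
  · -- n = 2, d = 1
    have hn2 : n = 2 := by omega
    have hd1 : d = 1 := by omega
    have hfixx : f x = x := by
      have h := Function.isPeriodicPt_minimalPeriod f x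
      rw [← hd, hd1] at h
      simpa [Function.IsPeriodicPt, Function.IsFixedPt] using h
    have hxP' : x = P := by
      rw [← hPeq, show n - 1 = 1 by omega, Function.iterate_one, hfixx]
    exact hp1 (hxP' ▸ hfixx)
  · -- n ≥ 3
    have hx0 : x ∈ Set.Icc l₁ l₂ := hsubL hxmem
    have hfP1 : l₁ ≤ f P := hxP ▸ hx0.1
    have hfP2 : f P ≤ l₂ := hxP ▸ hx0.2
    have h4 : f^[1] x ∈ Set.Icc l₁ l₂ := by
      have := hit 1 (by omega) x hxmem
      rwa [hKj 1 (by omega)] at this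
    rw [Function.iterate_one, hxP] at h4
    exact hdeg hfP1 hfP2 ⟨h4.1, h4.2⟩

theorem li_yorke_period_three_criterion (f : ℝ → ℝ)
    (hmaps : Set.MapsTo f (Set.Icc (0:ℝ) 1) (Set.Icc (0:ℝ) 1))
    (hcont : ContinuousOn f (Set.Icc (0:ℝ) 1))
    (x0 x1 x2 x3 : ℝ) (hx0 : x0 ∈ Set.Icc (0:ℝ) 1) (hx1 : x1 ∈ Set.Icc (0:ℝ) 1)
    (hx2 : x2 ∈ Set.Icc (0:ℝ) 1) (hx3 : x3 ∈ Set.Icc (0:ℝ) 1)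
    (h01 : f x0 = x1) (h12 : f x1 = x2) (h23 : f x2 = x3)
    (h30 : x3 ≤ x0) (h0lt1 : x0 < x1) :
    (∃ p ∈ Set.Icc (0:ℝ) 1, Function.minimalPeriod f p = 3) ∧
      ∀ m : ℕ, 1 ≤ m → ∃ q ∈ Set.Icc (0:ℝ) 1, Function.minimalPeriod f q = m := by
  obtain ⟨hx00, hx01⟩ := hx0
  obtain ⟨hx10, hx11⟩ := hx1
  obtain ⟨hx20, hx21⟩ := hx2
  obtain ⟨hx30, hx31⟩ := hx3
  -- a fixed point always exists
  have hfixed : ∃ z ∈ Set.Icc (0:ℝ) 1, Function.minimalPeriod f z = 1 := by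
    have hzz : ∃ z ∈ Set.Icc (0:ℝ) 1, f z = z := by
      by_cases hc : x0 < x2
      · have hsub : Set.Icc x0 x2 ⊆ Set.Icc (0:ℝ) 1 := Set.Icc_subset_Icc hx00 hx21
        have hg : ContinuousOn (fun t => f t - t) (Set.Icc x0 x2) :=
          (hcont.mono hsub).sub continuousOn_id
        have h0mem : (0:ℝ) ∈ Set.Icc (f x2 - x2) (f x0 - x0) := by
          rw [h01, h23]; constructor <;> [linarith; linarith]
        obtain ⟨z, hz, hz0⟩ := intermediate_value_Icc' hc.le hg h0mem
        exact ⟨z, hsub hz, by dsimp at hz0; linarith⟩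
      · push_neg at hc
        have hsub : Set.Icc x0 x1 ⊆ Set.Icc (0:ℝ) 1 := Set.Icc_subset_Icc hx00 hx11
        have hg : ContinuousOn (fun t => f t - t) (Set.Icc x0 x1) :=
          (hcont.mono hsub).sub continuousOn_id
        have h0mem : (0:ℝ) ∈ Set.Icc (f x1 - x1) (f x0 - x0) := by
          rw [h01, h12]; constructor <;> [linarith; linarith]
        obtain ⟨z, hz, hz0⟩ := intermediate_value_Icc' h0lt1.le hg h0mem
        exact ⟨z, hsub hz, by dsimp at hz0; linarith⟩
    obtain ⟨z, hz01, hz⟩ := hzz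
    exact ⟨z, hz01, Function.minimalPeriod_eq_one_iff_isFixedPt.mpr hz⟩
  -- the master lemma applies in each of three cases
  have hmaster : ∀ n, 2 ≤ n → ∃ x ∈ Set.Icc (0:ℝ) 1, Function.minimalPeriod f x = n := by
    by_cases hC : x1 < x2
    · -- L = [x1, x2], S = [x0, x1], P = x1
      refine liy_master f hcont x1 x2 x0 x1 x1 hx10 hC.le hx21 hx00 h0lt1.le hx11
        ?_ ?_ ?_ ?_ ?_ ?_ ?_ ?_ ?_
      · rw [h12, h23]; exact (min_le_right _ _).trans (by linarith)
      · rw [h12, h23]; exact le_max_left _ _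
      · rw [h12, h23]; exact (min_le_right _ _).trans (by linarith)
      · rw [h12, h23]; exact le_trans hC.le (le_max_left _ _)
      · rw [h01, h12]; exact min_le_left _ _
      · rw [h01, h12]; exact le_max_right _ _
      · intro y hy1 _ _ hy2; linarith
      · rw [h12]; exact ne_of_gt hC
      · rw [h12, h23]; intro _ _ ⟨h, _⟩; linarith
    · push_neg at hC
      by_cases hA : x2 ≤ x0
      · -- x2 < x0 strictly
        have hA' : x2 < x0 := by
          rcases lt_or_eq_of_le hA with h | h
          · exact h
          · exfalso; rw [h] at h23; rw [h01] at h23; linarith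
        -- L = [x0, x1], S = [x2, x0], P = x0
        refine liy_master f hcont x0 x1 x2 x0 x0 hx00 h0lt1.le hx11 hx20 hA'.le hx01
          ?_ ?_ ?_ ?_ ?_ ?_ ?_ ?_ ?_
        · rw [h01, h12]; exact (min_le_right _ _).trans hA
        · rw [h01, h12]; exact le_max_left _ _
        · rw [h01, h12]; exact min_le_right _ _
        · rw [h01, h12]; exact le_trans h0lt1.le (le_max_left _ _)
        · rw [h23, h01]; exact (min_le_left _ _).trans h30
        · rw [h23, h01]; exact le_max_right _ _
        · intro y hy1 _ _ hy2; linarith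
        · rw [h01]; exact ne_of_gt h0lt1
        · rw [h01, h12]; intro _ _ ⟨h, _⟩; linarith
      · push_neg at hA
        -- x0 < x2 ≤ x1, and x2 < x1 strictly
        have hB' : x2 < x1 := by
          rcases lt_or_eq_of_le hC with h | h
          · exact h
          · exfalso; rw [h, h12] at h23; linarith
        -- L = [x0, x2], S = [x2, x1], P = x2
        refine liy_master f hcont x0 x2 x2 x1 x2 hx00 hA.le hx21 hx20 hB'.le hx11
          ?_ ?_ ?_ ?_ ?_ ?_ ?_ ?_ ?_
        · rw [h01, h23]; exact (min_le_right _ _).trans h30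
        · rw [h01, h23]; exact le_trans hB'.le (le_max_left _ _)
        · rw [h01, h23]; exact (min_le_right _ _).trans (by linarith)
        · rw [h01, h23]; exact le_max_left _ _
        · rw [h23, h12]; exact (min_le_left _ _).trans h30
        · rw [h23, h12]; exact le_max_right _ _
        · intro y _ hy1 hy2 _; linarith
        · rw [h23]; intro h; linarith [h.symm ▸ hA]
        · rw [h23]
          intro hh1 hh2
          have hx3e : x3 = x0 := le_antisymm h30 hh1
          rw [hx3e, h01]
          rintro ⟨_, h⟩; linarith
  exact ⟨hmaster 3 (by norm_num), fun m hm => by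
    rcases Nat.lt_or_ge m 2 with h | h
    · have : m = 1 := by omega
      rw [this]; exact hfixed
    · exact hmaster m h⟩
end

section
/- Fix β∞ ∈ (0, 1/2), constants c₁, c₂ > 0, and define for L > 0: α(L) = c₁(1+L) and β(L) = β∞ + δ(L) where δ(L) → 0 as L → ∞ and β(L) ∈ (2β∞/3, 4β∞/3) for large L. Let f_L(x) = x/(x + (1−x)exp(α(L)(x−β(L)))), y(L) = β(L)/2, and x₁(L) = 1 − 1/α(L). Then for all sufficiently large L: f_L(y(L)) > x₁(L). -/
open Filter

theorem period_three_first_inequality (binf c1 : ℝ)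
    (hbinf : binf ∈ Set.Ioo (0:ℝ) (1/2)) (hc1 : 0 < c1)
    (δ : ℝ → ℝ) (hδ : Tendsto δ atTop (nhds 0)) :
    let β : ℝ → ℝ := fun L => binf + δ L
    let α : ℝ → ℝ := fun L => c1 * (1 + L)
    let f : ℝ → ℝ → ℝ := fun L x =>
      x / (x + (1 - x) * Real.exp (α L * (x - β L)))
    (∀ᶠ L in atTop, β L ∈ Set.Ioo (2 * binf / 3) (4 * binf / 3)) →
      ∀ᶠ L in atTop, f L (β L / 2) > 1 - 1 / α L := by
  intro β α f hIoo
  obtain ⟨hb0, hb12⟩ := hbinf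
  have hα : Tendsto α atTop atTop := by
    have : Tendsto (fun L : ℝ => 1 + L) atTop atTop :=
      tendsto_atTop_add_const_left atTop 1 tendsto_id
    exact this.const_mul_atTop hc1
  have hb3 : (0:ℝ) < binf / 3 := by linarith
  have ht : Tendsto (fun L => α L * (binf / 3)) atTop atTop :=
    hα.atTop_mul_const hb3
  have h1 : Tendsto (fun x : ℝ => x ^ 1 * Real.exp (-x)) atTop (nhds 0) :=
    Real.tendsto_pow_mul_exp_neg_atTop_nhds_zero 1
  have h2 : Tendsto (fun L => (α L * (binf / 3)) * Real.exp (-(α L * (binf / 3))))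
      atTop (nhds 0) := by
    have := h1.comp ht
    simpa [Function.comp_def] using this
  have h3 : Tendsto (fun L => α L * Real.exp (-(α L * (binf / 3)))) atTop (nhds 0) := by
    have := h2.const_mul (3 / binf)
    simp only [mul_zero] at this
    refine this.congr (fun L => ?_)
    field_simp
  have hg : ∀ᶠ L in atTop, α L * Real.exp (-(α L * (binf / 3))) < binf / 3 :=
    h3.eventually_lt_const hb3
  have hA : ∀ᶠ L in atTop, 1 < α L := hα.eventually_gt_atTop 1
  filter_upwards [hIoo, hA, hg] with L hb ha hgL
  obtain ⟨hbl, hbu⟩ := hb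
  set a := α L with hadef
  set b := β L with hbdef
  have ha0 : 0 < a := by linarith
  have hy0 : 0 < b / 2 := by linarith
  have hy1 : b / 2 < 1 := by linarith
  set E := Real.exp (a * (b / 2 - b)) with hEdef
  have hEpos : 0 < E := Real.exp_pos _
  have hEle : E ≤ Real.exp (-(a * (binf / 3))) := by
    apply Real.exp_le_exp.mpr
    nlinarith
  have hkey : (a - 1) * (1 - b / 2) * E < b / 2 := by
    have h4 : (a - 1) * (1 - b / 2) * E ≤ a * Real.exp (-(a * (binf / 3))) := by
      have h5 : (a - 1) * (1 - b / 2) ≤ a := by nlinarith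
      exact mul_le_mul h5 hEle hEpos.le ha0.le
    have : binf / 3 < b / 2 := by linarith
    linarith
  have hD : 0 < b / 2 + (1 - b / 2) * E := by
    have : 0 < (1 - b / 2) * E := mul_pos (by linarith) hEpos
    linarith
  show 1 - 1 / a < b / 2 / (b / 2 + (1 - b / 2) * E)
  have heq : 1 - 1 / a = (a - 1) / a := by field_simp
  rw [heq, div_lt_div_iff₀ ha0 hD]
  nlinarith
end

section
/- With α(L) = c₁(1+L), c₁ > 0, and β(L) → β∞ ∈ (0, 1/2), let f_L(x) = x/(x + (1−x)exp(α(L)(x−β(L)))), x₁ = 1 − 1/α(L), x₂ = f_L(x₁), x₃ = f_L(x₂). Then x₂ ≤ α(L)·exp(−α(L)(3/4 − β(L)/2)) and x₃ ≤ α(L)·exp((3α(L)/2)(β(L) − 1/2)); consequently x₃ → 0 as L → ∞. -/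
open Filter

lemma period3_step (a b x : ℝ) (ha0 : 0 < a) (hb0 : 0 < b)
    (hx0 : 0 ≤ x) (hx1 : x ≤ 1) :
    0 ≤ x / (x + (1 - x) * Real.exp (a * (x - b))) ∧
      x / (x + (1 - x) * Real.exp (a * (x - b))) ≤ x * Real.exp (a * b) := by
  have hab : 0 < a * b := mul_pos ha0 hb0
  have he1 : Real.exp (-(a * b)) ≤ 1 := Real.exp_le_one_iff.mpr (by linarith)
  have hepos : 0 < Real.exp (-(a * b)) := Real.exp_pos _
  have heE : Real.exp (-(a * b)) ≤ Real.exp (a * (x - b)) :=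
    Real.exp_le_exp.mpr (by nlinarith [mul_nonneg ha0.le hx0])
  have hD : Real.exp (-(a * b)) ≤ x + (1 - x) * Real.exp (a * (x - b)) := by
    nlinarith [mul_nonneg (by linarith : (0:ℝ) ≤ 1 - x)
      (by linarith : (0:ℝ) ≤ Real.exp (a * (x - b)) - Real.exp (-(a * b))),
      mul_nonneg hx0 (by linarith : (0:ℝ) ≤ 1 - Real.exp (-(a * b)))]
  have hDpos : 0 < x + (1 - x) * Real.exp (a * (x - b)) := lt_of_lt_of_le hepos hD
  refine ⟨div_nonneg hx0 hDpos.le, ?_⟩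
  have h1 : x / (x + (1 - x) * Real.exp (a * (x - b))) ≤ x / Real.exp (-(a * b)) :=
    div_le_div_of_nonneg_left hx0 hepos hD
  refine h1.trans_eq ?_
  rw [Real.exp_neg, div_eq_mul_inv, inv_inv]

lemma period3_aux (a b x1 x2 x3 : ℝ)
    (hx1 : x1 = 1 - 1 / a)
    (hx2 : x2 = x1 / (x1 + (1 - x1) * Real.exp (a * (x1 - b))))
    (hx3 : x3 = x2 / (x2 + (1 - x2) * Real.exp (a * (x2 - b))))
    (ha : 2 ≤ a) (hb0 : 0 < b) (hb : b < 1/2) (hab : 4 ≤ a * (1 - 2 * b)) :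
    x2 ≤ a * Real.exp (-a * (3 / 4 - b / 2)) ∧ 0 ≤ x3 ∧
      x3 ≤ a * Real.exp ((3 * a / 2) * (b - 1 / 2)) := by
  have ha0 : (0:ℝ) < a := by linarith
  have hia : 1 / a ≤ 1 / 2 := by
    rw [div_le_div_iff₀ ha0 (by norm_num)]; linarith
  have hia0 : 0 < 1 / a := by positivity
  have hx1lb : 1/2 ≤ x1 := by rw [hx1]; linarith
  have hx1le1 : x1 ≤ 1 := by rw [hx1]; linarith
  have h1mx1 : 1 - x1 = 1 / a := by rw [hx1]; ring
  have hiab : 1 / a ≤ (1 - 2 * b) / 4 := by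
    rw [div_le_div_iff₀ ha0 (by norm_num)]; nlinarith
  have hx1big : 3 / 4 + b / 2 ≤ x1 := by rw [hx1]; linarith
  have hE1 : 0 < Real.exp (a * (x1 - b)) := Real.exp_pos _
  have hD1pos : 0 < x1 + (1 - x1) * Real.exp (a * (x1 - b)) := by
    rw [h1mx1]; positivity
  -- x2 ≤ a * exp(-(a*(x1-b)))
  have key1 : x2 ≤ a * Real.exp (-(a * (x1 - b))) := by
    rw [hx2, Real.exp_neg, ← div_eq_mul_inv, div_le_div_iff₀ hD1pos hE1, h1mx1]
    have h1 : x1 * Real.exp (a * (x1 - b)) ≤ Real.exp (a * (x1 - b)) := by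
      nlinarith
    have h2 : (0:ℝ) ≤ a * x1 := by positivity
    calc x1 * Real.exp (a * (x1 - b)) ≤ Real.exp (a * (x1 - b)) := h1
      _ ≤ a * x1 + Real.exp (a * (x1 - b)) := by linarith
      _ = a * (x1 + 1 / a * Real.exp (a * (x1 - b))) := by field_simp
  have key1' : x2 ≤ a * Real.exp (-a * (3 / 4 - b / 2)) := by
    refine key1.trans (mul_le_mul_of_nonneg_left (Real.exp_le_exp.mpr ?_) ha0.le)
    nlinarith
  have hx2nn : 0 ≤ x2 := by
    rw [hx2]; exact div_nonneg (by linarith) hD1pos.le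
  have hx2le1 : x2 ≤ 1 := by
    rw [hx2]
    apply div_le_one_of_le₀ _ hD1pos.le
    nlinarith
  obtain ⟨h3nn, h3le⟩ := period3_step a b x2 ha0 hb0 hx2nn hx2le1
  rw [← hx3] at h3nn h3le
  refine ⟨key1', h3nn, ?_⟩
  calc x3 ≤ x2 * Real.exp (a * b) := h3le
    _ ≤ (a * Real.exp (-a * (3 / 4 - b / 2))) * Real.exp (a * b) :=
        mul_le_mul_of_nonneg_right key1' (Real.exp_pos _).le
    _ = a * Real.exp ((3 * a / 2) * (b - 1 / 2)) := by
        rw [mul_assoc, ← Real.exp_add]; ring_nf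

theorem period_three_decay_bounds (binf c1 : ℝ)
    (hbinf : binf ∈ Set.Ioo (0:ℝ) (1/2)) (hc1 : 0 < c1)
    (β : ℝ → ℝ) (hβ : Tendsto β atTop (nhds binf)) :
    let α : ℝ → ℝ := fun L => c1 * (1 + L)
    let f : ℝ → ℝ → ℝ := fun L x =>
      x / (x + (1 - x) * Real.exp (α L * (x - β L)))
    let x1 : ℝ → ℝ := fun L => 1 - 1 / α L
    let x2 : ℝ → ℝ := fun L => f L (x1 L)
    let x3 : ℝ → ℝ := fun L => f L (x2 L)
    (∀ᶠ L in atTop,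
        x2 L ≤ α L * Real.exp (-(α L) * (3 / 4 - β L / 2)) ∧
        x3 L ≤ α L * Real.exp ((3 * α L / 2) * (β L - 1 / 2))) ∧
      Tendsto x3 atTop (nhds 0) := by
  intro α f x1 x2 x3
  obtain ⟨hb0, hbh⟩ := hbinf
  obtain ⟨b2, hbinfb2, hb2lt⟩ : ∃ b2, binf < b2 ∧ b2 < 1/2 :=
    ⟨binf / 2 + 1 / 4, by linarith, by linarith⟩
  have hαtop : Tendsto α atTop atTop := by
    apply Tendsto.const_mul_atTop hc1
    exact tendsto_atTop_add_const_left atTop 1 tendsto_id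
  have hβub : ∀ᶠ L in atTop, β L < b2 := hβ.eventually_lt_const hbinfb2
  have hβlb : ∀ᶠ L in atTop, 0 < β L := hβ.eventually_const_lt hb0
  have hα2 : ∀ᶠ L in atTop, 2 ≤ α L := hαtop.eventually_ge_atTop 2
  have hα4 : ∀ᶠ L in atTop, 4 / (1 - 2 * b2) ≤ α L :=
    hαtop.eventually_ge_atTop _
  have hd : (0:ℝ) < 1 - 2 * b2 := by linarith
  have hmain : ∀ᶠ L in atTop,
      x2 L ≤ α L * Real.exp (-(α L) * (3 / 4 - β L / 2)) ∧ 0 ≤ x3 L ∧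
        x3 L ≤ α L * Real.exp ((3 * α L / 2) * (β L - 1 / 2)) := by
    filter_upwards [hβub, hβlb, hα2, hα4] with L h1 h2 h3 h4
    have hab : 4 ≤ α L * (1 - 2 * β L) := by
      have h5 : 4 ≤ α L * (1 - 2 * b2) := by
        rw [div_le_iff₀ hd] at h4; linarith
      nlinarith
    exact period3_aux (α L) (β L) (x1 L) (x2 L) (x3 L) rfl rfl rfl h3 h2
      (by linarith) hab
  constructor
  · filter_upwards [hmain] with L h using ⟨h.1, h.2.2⟩
  · obtain ⟨c, hc, hceq⟩ : ∃ c : ℝ, 0 < c ∧ c = 3 * (1 / 2 - b2) / 2 :=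
      ⟨_, by linarith, rfl⟩
    have hbound : ∀ᶠ L in atTop,
        x3 L ≤ (1 / c) * ((c * α L) ^ 1 * Real.exp (-(c * α L))) := by
      filter_upwards [hmain, hβub, hαtop.eventually_gt_atTop 0] with L h hβL hαL
      have h1 : α L * Real.exp ((3 * α L / 2) * (β L - 1 / 2)) ≤
          α L * Real.exp (-(c * α L)) := by
        apply mul_le_mul_of_nonneg_left _ hαL.le
        apply Real.exp_le_exp.mpr
        rw [hceq]; nlinarith
      have h2 : (1 / c) * ((c * α L) ^ 1 * Real.exp (-(c * α L)))
          = α L * Real.exp (-(c * α L)) := by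
        field_simp
      rw [h2]
      exact h.2.2.trans h1
    have htend : Tendsto (fun L => (1 / c) * ((c * α L) ^ 1 *
        Real.exp (-(c * α L)))) atTop (nhds 0) := by
      have h1 : Tendsto (fun L => c * α L) atTop atTop :=
        hαtop.const_mul_atTop hc
      have h2 : Tendsto (fun x : ℝ => x ^ 1 * Real.exp (-x)) atTop (nhds 0) :=
        Real.tendsto_pow_mul_exp_neg_atTop_nhds_zero 1
      have := (h2.comp h1).const_mul (1 / c)
      simpa using this
    have h0 : ∀ᶠ L in atTop, (0:ℝ) ≤ x3 L := by
      filter_upwards [hmain] with L h using h.2.1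
    exact tendsto_of_tendsto_of_tendsto_of_le_of_le' tendsto_const_nhds htend h0 hbound
end
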